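/- For any β > 0 and x in (0,1), η*(β) can be rewritten as 1 / (1 + (e^{β(2(Π_G−Π_B)+C_B−C_G)} − e^{−β(Π_B−Π_G+C_G)})/(1 − e^{−β(Π_B−Π_G+C_G)})), and in particular η*(β) is strictly monotone decreasing in β when 2(Π_G−Π_B)+C_B−C_G > 0. -/

import Mathlib

open Real Set

lemma aux1 {x : ℝ} (hx : 0 < x) : x * Real.exp (-x) < 1 - Real.exp (-x) := by
  have h := Real.add_one_lt_exp (by positivity : x ≠ 0)
  have he : 0 < Real.exp (-x) := Real.exp_pos _
  have hm : Real.exp x * Real.exp (-x) = 1 := by rw [← Real.exp_add]; simp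
  nlinarith [mul_lt_mul_of_pos_right h he]

lemma aux2 : StrictMonoOn (fun x : ℝ => x / (1 - Real.exp (-x))) (Set.Ioi 0) := by
  have hden : ∀ x : ℝ, 0 < x → 0 < 1 - Real.exp (-x) := by
    intro x hx
    have : Real.exp (-x) < 1 := by
      rw [Real.exp_lt_one_iff]; linarith
    linarith
  apply strictMonoOn_of_deriv_pos (convex_Ioi 0)
  · apply ContinuousOn.div continuousOn_id
    · fun_prop
    · intro x hx; exact ne_of_gt (hden x hx)
  · intro x hx
    rw [interior_Ioi] at hx
    have hd : HasDerivAt (fun x : ℝ => x / (1 - Real.exp (-x)))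
        ((1 * (1 - Real.exp (-x)) - x * Real.exp (-x)) / (1 - Real.exp (-x))^2) x := by
      have h1 : HasDerivAt (fun x : ℝ => 1 - Real.exp (-x)) (Real.exp (-x)) x := by
        have := (Real.hasDerivAt_exp (-x)).comp x (hasDerivAt_neg x)
        exact ((hasDerivAt_const x (1:ℝ)).sub this).congr_deriv (by simp)
      exact (hasDerivAt_id x).div h1 (ne_of_gt (hden x hx))
    rw [hd.deriv]
    have := aux1 hx
    have := hden x hx
    exact div_pos (by nlinarith) (by positivity)

lemma aux2' {s t : ℝ} (hs : 0 < s) (hst : s < t) :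
    s * Real.exp s * (Real.exp t - 1) < t * Real.exp t * (Real.exp s - 1) := by
  have ht : 0 < t := hs.trans hst
  have key : ∀ u : ℝ, 0 < u →
      u / (1 - Real.exp (-u)) = u * Real.exp u / (Real.exp u - 1) := by
    intro u hu
    have h1 : (1:ℝ) < Real.exp u := by rw [Real.one_lt_exp_iff]; exact hu
    rw [Real.exp_neg]
    field_simp
  have hk := aux2 (Set.mem_Ioi.2 hs) (Set.mem_Ioi.2 ht) hst
  simp only [key s hs, key t ht] at hk
  have h1 : (0:ℝ) < Real.exp s - 1 := by
    have : (1:ℝ) < Real.exp s := by rw [Real.one_lt_exp_iff]; exact hs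
    linarith
  have h2 : (0:ℝ) < Real.exp t - 1 := by
    have : (1:ℝ) < Real.exp t := by rw [Real.one_lt_exp_iff]; exact ht
    linarith
  rw [div_lt_div_iff₀ h1 h2] at hk
  linarith

lemma aux3 {a b : ℝ} (ha : 0 < a) (hab : a < b) :
    StrictMonoOn (fun β : ℝ => (Real.exp (β * b) - 1) / (Real.exp (β * a) - 1)) (Set.Ioi 0) := by
  have hden : ∀ x : ℝ, 0 < x → 0 < Real.exp (x * a) - 1 := by
    intro x hx
    have : (1:ℝ) < Real.exp (x * a) := by rw [Real.one_lt_exp_iff]; positivity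
    linarith
  apply strictMonoOn_of_deriv_pos (convex_Ioi 0)
  · apply ContinuousOn.div
    · fun_prop
    · fun_prop
    · intro x hx; exact ne_of_gt (hden x hx)
  · intro x hx
    rw [interior_Ioi] at hx
    have hx' : 0 < x := hx
    have hda : HasDerivAt (fun β : ℝ => Real.exp (β * a) - 1) (a * Real.exp (x * a)) x := by
      have := (Real.hasDerivAt_exp (x * a)).comp x ((hasDerivAt_id x).mul_const a)
      simpa [mul_comm] using this.sub_const 1
    have hdb : HasDerivAt (fun β : ℝ => Real.exp (β * b) - 1) (b * Real.exp (x * b)) x := by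
      have := (Real.hasDerivAt_exp (x * b)).comp x ((hasDerivAt_id x).mul_const b)
      simpa [mul_comm] using this.sub_const 1
    have hd := hdb.div hda (ne_of_gt (hden x hx'))
    rw [(show HasDerivAt (fun β : ℝ => (Real.exp (β * b) - 1) / (Real.exp (β * a) - 1)) _ x from hd).deriv]
    apply div_pos _ (pow_pos (hden x hx') 2)
    have hk := aux2' (s := x * a) (t := x * b) (by positivity)
      (by nlinarith [mul_lt_mul_of_pos_left hab hx'])
    have h4 : a * Real.exp (x*a) * (Real.exp (x*b) - 1)
        < b * Real.exp (x*b) * (Real.exp (x*a) - 1) := by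
      apply lt_of_mul_lt_mul_left _ hx'.le
      linear_combination hk
    linarith

noncomputable def etaStar (PB PG CB CG β : ℝ) : ℝ :=
  (Real.exp (β * (PB - PG + CG)) - 1) /
    (Real.exp (β * (PB - PG + CG)) - 1 + (Real.exp (β * (PG - PB + CB)) - 1))

theorem stmt12 (PB PG CB CG : ℝ) (hCB : 0 ≤ CB) (hCG : 0 ≤ CG)
    (hC : 0 < CB + CG) (h1 : PG + CB > PB) (h2 : PB > PG - CG) :
    (∀ β : ℝ, 0 < β →
      etaStar PB PG CB CG β =
        1 / (1 + (Real.exp (β * (2 * (PG - PB) + CB - CG))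
            - Real.exp (-(β * (PB - PG + CG)))) /
          (1 - Real.exp (-(β * (PB - PG + CG)))))) ∧
    (2 * (PG - PB) + CB - CG > 0 →
      StrictAntiOn (etaStar PB PG CB CG) (Set.Ioi 0)) := by
  set a := PB - PG + CG with ha_def
  set b := PG - PB + CB with hb_def
  have ha : 0 < a := by simp [ha_def]; linarith
  have hb : 0 < b := by simp [hb_def]; linarith
  have hX : ∀ β : ℝ, 0 < β → 1 < Real.exp (β * a) := by
    intro β hβ; rw [Real.one_lt_exp_iff]; positivity
  have hY : ∀ β : ℝ, 0 < β → 1 < Real.exp (β * b) := by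
    intro β hβ; rw [Real.one_lt_exp_iff]; positivity
  constructor
  · intro β hβ
    have hX' := hX β hβ
    have hY' := hY β hβ
    have hXpos : 0 < Real.exp (β * a) := Real.exp_pos _
    have harg : β * (2 * (PG - PB) + CB - CG) = β * b - β * a := by
      rw [ha_def, hb_def]; ring
    rw [etaStar, ← ha_def, ← hb_def, harg, Real.exp_sub, Real.exp_neg]
    have h1' : Real.exp (β * a) - 1 ≠ 0 := by linarith
    have h2' : Real.exp (β * a) - 1 + (Real.exp (β * b) - 1) ≠ 0 := by
      intro h; nlinarith
    have h3' : 1 - (Real.exp (β * a))⁻¹ ≠ 0 := by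
      have : (Real.exp (β * a))⁻¹ < 1 := by
        rw [inv_lt_one_iff₀]; right; exact hX'
      linarith
    field_simp
  · intro hba
    have hab : a < b := by rw [ha_def, hb_def]; linarith
    have hg := aux3 ha hab
    intro β1 hβ1 β2 hβ2 h12
    have hrw : ∀ β : ℝ, 0 < β → etaStar PB PG CB CG β =
        1 / (1 + (Real.exp (β * b) - 1) / (Real.exp (β * a) - 1)) := by
      intro β hβ
      have hX' := hX β hβ
      have hY' := hY β hβ
      have h1' : Real.exp (β * a) - 1 ≠ 0 := by linarith
      have h2' : Real.exp (β * a) - 1 + (Real.exp (β * b) - 1) ≠ 0 := by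
        intro h; nlinarith
      rw [etaStar, ← ha_def, ← hb_def]
      field_simp
    rw [hrw β1 hβ1, hrw β2 hβ2]
    have hlt := hg hβ1 hβ2 h12
    simp only at hlt
    have hpos1 : 0 < 1 + (Real.exp (β1 * b) - 1) / (Real.exp (β1 * a) - 1) := by
      have hX' := hX β1 hβ1
      have hY' := hY β1 hβ1
      have : 0 < (Real.exp (β1 * b) - 1) / (Real.exp (β1 * a) - 1) :=
        div_pos (by linarith) (by linarith)
      linarith
    exact one_div_lt_one_div_of_lt hpos1 (by linarith)
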